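/- Let m be a natural number, let u, v : Fin m → ℝ be linearly independent and let u', v' : Fin m → ℝ be linearly independent. Set B i j = u i * v j − v i * u j and B' i j = u' i * v' j − v' i * u' j. Then the full antisymmetrization over all four indices of (i,j,k,l) ↦ B i j * B' k l vanishes for all i,j,k,l (the condition B_{[ij}B'_{kl]} = 0) if and only if the 2-planes intersect nontrivially: span{u,v} ∩ span{u',v'} ≠ {0}. -/

import Mathlib

open Finset

/-- Full antisymmetrization of a 4-index expression over all four index slots. -/
noncomputable def alt4 {m : ℕ} (T : Fin m → Fin m → Fin m → Fin m → ℝ)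
    (i j k l : Fin m) : ℝ :=
  (1 / 24 : ℝ) * ∑ σ : Equiv.Perm (Fin 4),
    ((Equiv.Perm.sign σ : ℤ) : ℝ) *
      T (![i, j, k, l] (σ 0)) (![i, j, k, l] (σ 1)) (![i, j, k, l] (σ 2)) (![i, j, k, l] (σ 3))

/-- The simple bivector `(u∧v) i j = u i * v j − v i * u j`. -/
noncomputable def wedge {m : ℕ} (u v : Fin m → ℝ) : Fin m → Fin m → ℝ :=
  fun i j => u i * v j - v i * u j

lemma sum_det {m : ℕ} (w : Fin 4 → (Fin m → ℝ)) (x : Fin 4 → Fin m) :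
    (∑ σ : Equiv.Perm (Fin 4), ((Equiv.Perm.sign σ : ℤ) : ℝ) *
      (w 0 (x (σ 0)) * w 1 (x (σ 1)) * w 2 (x (σ 2)) * w 3 (x (σ 3))))
    = (Matrix.of fun c p : Fin 4 => w p (x c)).det := by
  rw [Matrix.det_apply']
  refine Finset.sum_congr rfl fun σ _ => ?_
  rw [Fin.prod_univ_four]
  simp [Matrix.of_apply]

lemma swap_col_det {m : ℕ} (u v u' v' : Fin m → ℝ) (x : Fin 4 → Fin m) :
    (Matrix.of fun c p : Fin 4 => ![v, u, u', v'] p (x c)).det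
        = -(Matrix.of fun c p : Fin 4 => ![u, v, u', v'] p (x c)).det ∧
    (Matrix.of fun c p : Fin 4 => ![u, v, v', u'] p (x c)).det
        = -(Matrix.of fun c p : Fin 4 => ![u, v, u', v'] p (x c)).det ∧
    (Matrix.of fun c p : Fin 4 => ![v, u, v', u'] p (x c)).det
        = (Matrix.of fun c p : Fin 4 => ![u, v, u', v'] p (x c)).det := by
  refine ⟨?_, ?_, ?_⟩
  · have h : (Matrix.of fun c p : Fin 4 => ![v, u, u', v'] p (x c))
        = (Matrix.of fun c p : Fin 4 => ![u, v, u', v'] p (x c)).submatrix id (Equiv.swap 0 1) := by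
      ext c p
      fin_cases p <;> simp [Matrix.submatrix, Equiv.swap_apply_def]
    rw [h, Matrix.det_permute', Equiv.Perm.sign_swap (by decide)]
    simp
  · have h : (Matrix.of fun c p : Fin 4 => ![u, v, v', u'] p (x c))
        = (Matrix.of fun c p : Fin 4 => ![u, v, u', v'] p (x c)).submatrix id (Equiv.swap 2 3) := by
      ext c p
      fin_cases p <;> simp [Matrix.submatrix, Equiv.swap_apply_def]
    rw [h, Matrix.det_permute', Equiv.Perm.sign_swap (by decide)]
    simp
  · set σ : Equiv.Perm (Fin 4) := Equiv.swap 0 1 * Equiv.swap 2 3 with hσ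
    have h : (Matrix.of fun c p : Fin 4 => ![v, u, v', u'] p (x c))
        = (Matrix.of fun c p : Fin 4 => ![u, v, u', v'] p (x c)).submatrix id σ := by
      ext c p
      fin_cases p <;> simp [hσ, Matrix.submatrix, Equiv.Perm.mul_apply, Equiv.swap_apply_def]
    rw [h, Matrix.det_permute', hσ, Equiv.Perm.sign_mul, Equiv.Perm.sign_swap (by decide),
      Equiv.Perm.sign_swap (by decide)]
    simp

lemma alt4_eq {m : ℕ} (u v u' v' : Fin m → ℝ) (i j k l : Fin m) :
    alt4 (fun i j k l => wedge u v i j * wedge u' v' k l) i j k l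
    = (1 / 6 : ℝ) * (Matrix.of fun c p : Fin 4 => ![u, v, u', v'] p (![i, j, k, l] c)).det := by
  set x : Fin 4 → Fin m := ![i, j, k, l] with hx
  unfold alt4 wedge
  have expand : ∀ σ : Equiv.Perm (Fin 4),
      ((Equiv.Perm.sign σ : ℤ) : ℝ) *
        ((u (x (σ 0)) * v (x (σ 1)) - v (x (σ 0)) * u (x (σ 1))) *
          (u' (x (σ 2)) * v' (x (σ 3)) - v' (x (σ 2)) * u' (x (σ 3))))
      = ((Equiv.Perm.sign σ : ℤ) : ℝ) * (u (x (σ 0)) * v (x (σ 1)) * u' (x (σ 2)) * v' (x (σ 3)))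
      - ((Equiv.Perm.sign σ : ℤ) : ℝ) * (v (x (σ 0)) * u (x (σ 1)) * u' (x (σ 2)) * v' (x (σ 3)))
      - ((Equiv.Perm.sign σ : ℤ) : ℝ) * (u (x (σ 0)) * v (x (σ 1)) * v' (x (σ 2)) * u' (x (σ 3)))
      + ((Equiv.Perm.sign σ : ℤ) : ℝ) * (v (x (σ 0)) * u (x (σ 1)) * v' (x (σ 2)) * u' (x (σ 3))) := by
    intro σ; ring
  rw [Finset.sum_congr rfl fun σ _ => expand σ]
  rw [Finset.sum_add_distrib, Finset.sum_sub_distrib, Finset.sum_sub_distrib]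
  have h1 := sum_det ![u, v, u', v'] x
  have h2 := sum_det ![v, u, u', v'] x
  have h3 := sum_det ![u, v, v', u'] x
  have h4 := sum_det ![v, u, v', u'] x
  simp only [Matrix.cons_val_zero, Matrix.cons_val_one, Matrix.head_cons, Matrix.cons_val_two,
    Matrix.tail_cons, Matrix.cons_val_three] at h1 h2 h3 h4
  rw [h1, h2, h3, h4]
  obtain ⟨e2, e3, e4⟩ := swap_col_det u v u' v' x
  rw [e2, e3, e4]
  ring

lemma det_zero_of_dep {m : ℕ} (w : Fin 4 → (Fin m → ℝ)) (g : Fin 4 → ℝ) (hg : g ≠ 0)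
    (h : ∀ i, ∑ p, g p * w p i = 0) (x : Fin 4 → Fin m) :
    (Matrix.of fun c p : Fin 4 => w p (x c)).det = 0 := by
  rw [← Matrix.exists_mulVec_eq_zero_iff]
  refine ⟨g, hg, ?_⟩
  funext c
  simp only [Matrix.mulVec, Matrix.of_apply, Pi.zero_apply, dotProduct]
  rw [Finset.sum_congr rfl fun p _ => mul_comm (w p (x c)) (g p)]
  exact h (x c)

lemma exists_det_ne {m : ℕ} (w : Fin 4 → (Fin m → ℝ)) (hw : LinearIndependent ℝ w) :
    ∃ x : Fin 4 → Fin m, (Matrix.of fun c p : Fin 4 => w p (x c)).det ≠ 0 := by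
  classical
  set col : Fin m → (Fin 4 → ℝ) := fun i p => w p i with hcol
  have hspan : Submodule.span ℝ (Set.range col) = ⊤ := by
    by_contra hne
    obtain ⟨f, hf0, hfmap⟩ := Submodule.exists_dual_map_eq_bot_of_lt_top
      (lt_top_iff_ne_top.2 hne) inferInstance
    have hfcol : ∀ i, f (col i) = 0 := by
      intro i
      have : f (col i) ∈ (Submodule.span ℝ (Set.range col)).map f :=
        Submodule.mem_map_of_mem (Submodule.subset_span ⟨i, rfl⟩)
      rw [hfmap] at this
      simpa using this
    set g : Fin 4 → ℝ := fun p => f ((Pi.single p 1 : Fin 4 → ℝ)) with hgdef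
    have hg0 : ∀ p, g p = 0 := by
      have hsum : ∀ i, ∑ p, w p i • g p = 0 := by
        intro i
        have : col i = ∑ p, (col i p) • (Pi.single p 1 : Fin 4 → ℝ) := by
          funext q
          simp [Pi.single_apply, Finset.sum_ite_eq' , smul_eq_mul]
        calc ∑ p, w p i • g p = f (col i) := by
              rw [this, map_sum]; simp [hgdef, hcol, smul_eq_mul]
          _ = 0 := hfcol i
      rw [linearIndependent_iff'] at hw
      intro p
      exact hw Finset.univ (fun p => g p) (by
        funext i
        simpa [smul_eq_mul, mul_comm] using hsum i) p (Finset.mem_univ p)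
    apply hf0
    apply LinearMap.ext; intro y
    have hy : y = ∑ p, y p • (Pi.single p 1 : Fin 4 → ℝ) := by
      funext q; simp [Pi.single_apply, Finset.sum_ite_eq', smul_eq_mul]
    rw [hy, map_sum]
    simp [hgdef] at hg0 ⊢
    simp [hg0]
  obtain ⟨s, hsub, hspan_s, hli⟩ := exists_linearIndependent ℝ (Set.range col)
  rw [hspan] at hspan_s
  have hfin : s.Finite := hli.setFinite
  haveI : Fintype s := hfin.fintype
  let b : Module.Basis s ℝ (Fin 4 → ℝ) := Module.Basis.mk hli (by rw [Subtype.range_coe, hspan_s])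
  have hcard : Fintype.card s = 4 := by
    have h1 := Module.finrank_eq_card_basis b
    simpa using h1.symm
  let e : Fin 4 ≃ s := (Fintype.equivFinOfCardEq hcard).symm
  have hchoose : ∀ t : Fin 4, ∃ i : Fin m, col i = (e t : Fin 4 → ℝ) := by
    intro t
    obtain ⟨i, hi⟩ := hsub (e t).2
    exact ⟨i, hi⟩
  choose g hg using hchoose
  set Q : Matrix (Fin 4) (Fin 4) ℝ := Matrix.of fun c t => w c (g t) with hQ
  have hcols : LinearIndependent ℝ (fun t => Q.transpose t) := by
    have : (fun t : Fin 4 => Q.transpose t) = fun t => (e t : Fin 4 → ℝ) := by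
      funext t
      have := hg t
      funext c
      calc Q.transpose t c = col (g t) c := rfl
        _ = (e t : Fin 4 → ℝ) c := by rw [hg t]
    rw [this]
    exact hli.comp e e.injective
  have hdet : Q.det ≠ 0 := by
    have := Matrix.linearIndependent_cols_iff_isUnit.mp hcols
    rw [Matrix.isUnit_iff_isUnit_det, isUnit_iff_ne_zero] at this
    exact this
  refine ⟨g, ?_⟩
  have : (Matrix.of fun c p : Fin 4 => w p (g c)) = Q.transpose := by
    ext a bb; rfl
  rw [this, Matrix.det_transpose]
  exact hdet

lemma pair_coeffs {m : ℕ} {u v : Fin m → ℝ} (h : LinearIndependent ℝ ![u, v])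
    {a b : ℝ} (hab : a • u + b • v = 0) : a = 0 ∧ b = 0 := by
  have := Fintype.linearIndependent_iff.mp h ![a, b] (by
    rw [Fin.sum_univ_two]
    simpa using hab)
  exact ⟨this 0, this 1⟩

lemma notLI_iff_intersect {m : ℕ} (u v u' v' : Fin m → ℝ)
    (huv : LinearIndependent ℝ ![u, v]) (huv' : LinearIndependent ℝ ![u', v']) :
    ¬ LinearIndependent ℝ ![u, v, u', v'] ↔
      Submodule.span ℝ {u, v} ⊓ Submodule.span ℝ {u', v'} ≠ ⊥ := by
  constructor
  · intro h
    obtain ⟨g, hsum, p, hp⟩ := Fintype.not_linearIndependent_iff.mp h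
    rw [Fin.sum_univ_four] at hsum
    simp only [Matrix.cons_val_zero, Matrix.cons_val_one, Matrix.head_cons, Matrix.cons_val_two,
      Matrix.tail_cons, Matrix.cons_val_three] at hsum
    set z : Fin m → ℝ := g 0 • u + g 1 • v with hz
    have hz2 : z = (-(g 2)) • u' + (-(g 3)) • v' := by
      have h' : z + (g 2 • u' + g 3 • v') = 0 := by rw [← add_assoc]; exact hsum
      have h'' := eq_neg_of_add_eq_zero_left h'
      rw [h'']; module
    have hzne : z ≠ 0 := by
      intro h0
      obtain ⟨h1, h2⟩ := pair_coeffs huv (hz ▸ h0)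
      have h34 : g 2 • u' + g 3 • v' = 0 := by
        have h' := hsum
        rw [h0] at h'
        simpa using h'
      obtain ⟨h3, h4⟩ := pair_coeffs huv' h34
      fin_cases p <;> simp_all
    rw [Submodule.ne_bot_iff]
    refine ⟨z, Submodule.mem_inf.mpr ⟨?_, ?_⟩, hzne⟩
    · exact Submodule.mem_span_pair.mpr ⟨g 0, g 1, hz.symm⟩
    · exact Submodule.mem_span_pair.mpr ⟨-(g 2), -(g 3), hz2.symm⟩
  · intro h
    obtain ⟨z, hzmem, hzne⟩ := Submodule.ne_bot_iff _ |>.mp h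
    obtain ⟨hz1, hz2⟩ := Submodule.mem_inf.mp hzmem
    obtain ⟨a, b, hab⟩ := Submodule.mem_span_pair.mp hz1
    obtain ⟨c, d, hcd⟩ := Submodule.mem_span_pair.mp hz2
    rw [Fintype.not_linearIndependent_iff]
    refine ⟨![a, b, -c, -d], ?_, ?_⟩
    · rw [Fin.sum_univ_four]
      simp only [Matrix.cons_val_zero, Matrix.cons_val_one, Matrix.head_cons, Matrix.cons_val_two,
        Matrix.tail_cons, Matrix.cons_val_three]
      have hre : a • u + b • v + -c • u' + -d • v' = (a • u + b • v) - (c • u' + d • v') := by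
        module
      rw [hre, hab, hcd, sub_self]
    · by_contra hall
      push_neg at hall
      have ha := hall 0
      have hb := hall 1
      simp only [Matrix.cons_val_zero, Matrix.cons_val_one, Matrix.head_cons] at ha hb
      apply hzne
      rw [← hab, ha, hb]
      simp

/-- For simple bivectors `B = u∧v`, `B' = u'∧v'` built from linearly independent pairs,
the Plucker condition `B_{[ij}B'_{kl]} = 0` holds iff the two 2-planes intersect
nontrivially. -/
theorem plucker_iff_planes_intersect (m : ℕ) (u v u' v' : Fin m → ℝ)
    (huv : LinearIndependent ℝ ![u, v]) (huv' : LinearIndependent ℝ ![u', v']) :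
    (∀ i j k l, alt4 (fun i j k l => wedge u v i j * wedge u' v' k l) i j k l = 0) ↔
    Submodule.span ℝ {u, v} ⊓ Submodule.span ℝ {u', v'} ≠ ⊥ := by
  rw [← notLI_iff_intersect u v u' v' huv huv']
  constructor
  · intro H hLI
    obtain ⟨x, hx⟩ := exists_det_ne ![u, v, u', v'] hLI
    apply hx
    have hxe : ![x 0, x 1, x 2, x 3] = x := by
      funext c; fin_cases c <;> rfl
    have := H (x 0) (x 1) (x 2) (x 3)
    rw [alt4_eq, hxe] at this
    linarith [this]
  · intro h i j k l
    obtain ⟨g, hsum, p, hp⟩ := Fintype.not_linearIndependent_iff.mp h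
    rw [alt4_eq]
    rw [det_zero_of_dep ![u, v, u', v'] g ?_ ?_ ![i, j, k, l]]
    · ring
    · intro h0; apply hp; rw [h0]; rfl
    · intro i'
      have := congrFun hsum i'
      simpa [Finset.sum_apply, smul_eq_mul] using this
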